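/- arXiv:0905.4248 — 2 statements merged into one kernel-verified Lean document; each statement's English description precedes it below -/
import Mathlib

section
/- Let G be a finite abelian group, k ≥ 1, and ℓ ≥ 1. Then D_{k+1}(G) ≤ max{D_k(G) + ℓ, s_{≤ℓ}(G) − 1}. -/
open Multiset

/-- A nonempty zero-sum sequence (multiset) over `G`. -/
def IsZeroSumSeq {G : Type*} [AddCommGroup G] (S : Multiset G) : Prop :=
  S ≠ 0 ∧ S.sum = 0

/-- A minimal zero-sum sequence: nonempty, zero-sum, and with no proper
nonempty zero-sum subsequence. -/
def IsMinZeroSum {G : Type*} [AddCommGroup G] (S : Multiset G) : Prop :=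
  S ≠ 0 ∧ S.sum = 0 ∧ ∀ T : Multiset G, T ≤ S → T ≠ 0 → T.sum = 0 → T = S

/-- `ζ` is a factorization of `B` into minimal zero-sum sequences. -/
def IsFactorization {G : Type*} [AddCommGroup G] (ζ : Multiset (Multiset G))
    (B : Multiset G) : Prop :=
  ζ.sum = B ∧ ∀ A ∈ ζ, IsMinZeroSum A

/-- The set of lengths `L(B)` of factorizations of `B` into minimal zero-sum
sequences. -/
def lengthSet {G : Type*} [AddCommGroup G] (B : Multiset G) : Set ℕ :=
  { n | ∃ ζ : Multiset (Multiset G), IsFactorization ζ B ∧ Multiset.card ζ = n }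

/-- `max L(B)`, the maximal length of a factorization of `B` into minimal
zero-sum sequences. -/
noncomputable def maxL {G : Type*} [AddCommGroup G] (B : Multiset G) : ℕ :=
  sSup (lengthSet B)

/-- `S` contains `k` disjoint nonempty zero-sum subsequences. -/
def HasKDisjointZeroSum {G : Type*} [AddCommGroup G] (k : ℕ) (S : Multiset G) : Prop :=
  ∃ T : Multiset (Multiset G), Multiset.card T = k ∧
    (∀ A ∈ T, IsZeroSumSeq A) ∧ T.sum ≤ S

/-- The `k`-wise Davenport constant: the smallest `ℓ` such that every sequence
over `G` of length at least `ℓ` has `k` disjoint nonempty zero-sum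
subsequences. -/
noncomputable def Dk (G : Type*) [AddCommGroup G] (k : ℕ) : ℕ :=
  sInf { ℓ : ℕ | ∀ S : Multiset G, ℓ ≤ Multiset.card S → HasKDisjointZeroSum k S }

/-- `s_{≤ k}(G)` as an extended natural number: the smallest `m` such that every
sequence over `G` of length at least `m` has a nonempty zero-sum subsequence of
length at most `k`. -/
noncomputable def sLE (G : Type*) [AddCommGroup G] (k : ℕ) : ℕ∞ :=
  sInf { m : ℕ∞ | ∀ S : Multiset G, m ≤ (Multiset.card S : ℕ∞) →
    ∃ T ≤ S, T ≠ 0 ∧ T.sum = 0 ∧ Multiset.card T ≤ k }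

/-- `s_{≤ k}(G)` as a natural number (used when it is known to be finite). -/
noncomputable def sleN (G : Type*) [AddCommGroup G] (k : ℕ) : ℕ :=
  sInf { m : ℕ | ∀ S : Multiset G, m ≤ Multiset.card S →
    ∃ T ≤ S, T ≠ 0 ∧ T.sum = 0 ∧ Multiset.card T ≤ k }

/-- `η(G) = s_{≤ exp(G)}(G)`. -/
noncomputable def etaC (G : Type*) [AddCommGroup G] : ℕ :=
  sleN G (AddMonoid.exponent G)

section aux
variable {G : Type*} [AddCommGroup G] [Fintype G]

variable {G : Type*} [AddCommGroup G] [Fintype G]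

lemma exists_short_zerosum' (S : Multiset G) (h : Fintype.card G ≤ Multiset.card S) :
    ∃ T ≤ S, T ≠ 0 ∧ T.sum = 0 ∧ Multiset.card T ≤ Fintype.card G := by
  set n := Fintype.card G with hn
  obtain ⟨l, rfl⟩ : ∃ l : List G, (↑l : Multiset G) = S := ⟨S.toList, S.coe_toList⟩
  have hlen : n ≤ l.length := by simpa using h
  have hcard : Fintype.card G < Fintype.card (Fin (n + 1)) := by simp [hn]
  obtain ⟨i, j, hij, hfij⟩ := Fintype.exists_ne_map_eq_of_card_lt
    (fun i : Fin (n + 1) => (l.take i).sum) (by simpa using hcard)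
  wlog hlt : (i : ℕ) < (j : ℕ) generalizing i j
  · have hne : (i : ℕ) ≠ (j : ℕ) := fun hc => hij (Fin.ext hc)
    exact this j i hij.symm hfij.symm (by omega)
  refine ⟨((l.drop i).take (j - i) : List G), ?_, ?_, ?_, ?_⟩
  · exact ((List.take_sublist _ _).trans (List.drop_sublist _ _)).subperm
  · have hpos : 0 < ((l.drop i).take ((j:ℕ) - i)).length := by
      rw [List.length_take, List.length_drop]
      have : (j:ℕ) ≤ n := Nat.lt_succ_iff.mp j.isLt
      omega
    simp only [ne_eq, Multiset.coe_eq_zero]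
    intro hnil; rw [hnil] at hpos; simp at hpos
  · have hsplit : l.take j = l.take i ++ (l.drop i).take ((j:ℕ) - i) := by
      rw [← List.take_add]; congr 1; omega
    have : (l.take (j:ℕ)).sum = (l.take (i:ℕ)).sum + ((l.drop i).take ((j:ℕ) - i)).sum := by
      rw [hsplit, List.sum_append]
    rw [Multiset.sum_coe]
    have hfij' : (l.take (i:ℕ)).sum = (l.take (j:ℕ)).sum := hfij
    rw [← hfij'] at this
    exact (add_left_cancel (a := (l.take (i:ℕ)).sum) (by rw [← this, add_zero])).symm
  · rw [Multiset.coe_card, List.length_take]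
    have : (j:ℕ) ≤ n := Nat.lt_succ_iff.mp j.isLt
    omega

lemma hasK_of_card (k : ℕ) (S : Multiset G) (h : k * Fintype.card G ≤ Multiset.card S) :
    HasKDisjointZeroSum k S := by
  classical
  induction k generalizing S with
  | zero => exact ⟨0, rfl, by simp, by simp⟩
  | succ k ih =>
    rw [Nat.succ_mul] at h
    have h1 : Fintype.card G ≤ Multiset.card S := by omega
    obtain ⟨T, hTS, hT0, hTsum, hTcard⟩ := exists_short_zerosum' S h1
    have hcs : Multiset.card (S - T) = Multiset.card S - Multiset.card T :=
      Multiset.card_sub hTS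
    obtain ⟨F, hFc, hFz, hFle⟩ := ih (S - T) (by omega)
    refine ⟨T ::ₘ F, by simp [hFc], ?_, ?_⟩
    · intro A hA
      rcases Multiset.mem_cons.mp hA with h' | h'
      · exact h' ▸ ⟨hT0, hTsum⟩
      · exact hFz A h'
    · rw [Multiset.sum_cons]
      calc T + F.sum ≤ T + (S - T) := add_le_add_right hFle T
        _ = S := by rw [add_comm, tsub_add_cancel_of_le hTS]

lemma sum_join_eq_zero (F : Multiset (Multiset G)) (h : ∀ A ∈ F, Multiset.sum A = 0) :
    F.sum.sum = 0 := by
  induction F using Multiset.induction with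
  | empty => simp
  | cons A F ih =>
    rw [Multiset.sum_cons, Multiset.sum_add, h A (Multiset.mem_cons_self A F),
      ih fun B hB => h B (Multiset.mem_cons_of_mem hB), add_zero]


lemma dk_spec (k : ℕ) (S : Multiset G) (h : Dk G k ≤ Multiset.card S) :
    HasKDisjointZeroSum k S :=
  Nat.sInf_mem (s := { m : ℕ | ∀ S : Multiset G, m ≤ Multiset.card S → HasKDisjointZeroSum k S })
    ⟨k * Fintype.card G, fun S hS => hasK_of_card k S hS⟩ S h

lemma extend_zerosum (k : ℕ) (S T R : Multiset G) (h0 : T ≠ 0) (hs : T.sum = 0)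
    (hR : T + R = S) (hK : HasKDisjointZeroSum k R) : HasKDisjointZeroSum (k + 1) S := by
  obtain ⟨F, hFc, hFz, hFle⟩ := hK
  refine ⟨T ::ₘ F, by simp [hFc], ?_, ?_⟩
  · intro A hA
    rcases Multiset.mem_cons.mp hA with h' | h'
    · exact h' ▸ ⟨h0, hs⟩
    · exact hFz A h'
  · rw [Multiset.sum_cons]
    calc T + F.sum ≤ T + R := add_le_add_right hFle T
      _ = S := hR


end aux

theorem statement3 {G : Type*} [AddCommGroup G] [Fintype G] (k ℓ : ℕ)
    (hk : 1 ≤ k) (hℓ : 1 ≤ ℓ) :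
    (Dk G (k + 1) : ℕ∞) ≤ max ((Dk G k : ℕ∞) + (ℓ : ℕ∞)) (sLE G ℓ - 1) := by
  classical
  rcases eq_or_ne (sLE G ℓ) ⊤ with htop | hfin
  · rw [htop]
    have : (⊤ : ℕ∞) - 1 = ⊤ := by simp
    rw [this]
    exact le_max_of_le_right le_top
  · obtain ⟨m, hm⟩ := WithTop.ne_top_iff_exists.mp hfin
    -- the defining set of sLE contains m
    have hP : ∀ S : Multiset G, (m : ℕ∞) ≤ (Multiset.card S : ℕ∞) →
        ∃ T ≤ S, T ≠ 0 ∧ T.sum = 0 ∧ Multiset.card T ≤ ℓ := by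
      have hlt : sInf { m : ℕ∞ | ∀ S : Multiset G, m ≤ (Multiset.card S : ℕ∞) →
          ∃ T ≤ S, T ≠ 0 ∧ T.sum = 0 ∧ Multiset.card T ≤ ℓ } < (m : ℕ∞) + 1 := by
        rw [show sInf _ = sLE G ℓ from rfl, ← hm]
        rw [← Nat.cast_one, ← Nat.cast_add]
        exact ENat.coe_lt_coe.mpr (Nat.lt_succ_self m)
      obtain ⟨u, hu, hul⟩ := sInf_lt_iff.mp hlt
      have hum : u ≤ (m : ℕ∞) := by
        cases u with
        | top => simp at hul
        | coe a => exact_mod_cast Nat.lt_succ_iff.mp (by exact_mod_cast hul)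
      exact fun S hS => hu S (le_trans hum hS)
    have hPn : ∀ S : Multiset G, m ≤ Multiset.card S →
        ∃ T ≤ S, T ≠ 0 ∧ T.sum = 0 ∧ Multiset.card T ≤ ℓ :=
      fun S hS => hP S (by exact_mod_cast hS)
    rw [← hm]
    set N := max (Dk G k + ℓ) (m - 1) with hN
    have hfinal : (N : ℕ∞) ≤ max ((Dk G k : ℕ∞) + (ℓ : ℕ∞)) ((m : ℕ∞) - 1) := by
      rcases max_choice (Dk G k + ℓ) (m - 1) with h | h <;> rw [hN, h]
      · exact le_max_of_le_left (by push_cast; exact le_refl _)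
      · refine le_max_of_le_right (le_of_eq ?_)
        rw [ENat.coe_sub, Nat.cast_one]
    refine le_trans (Nat.cast_le.mpr ?_) hfinal
    refine Nat.sInf_le ?_
    intro S hS
    by_cases hshort : ∃ T ≤ S, T ≠ 0 ∧ T.sum = 0 ∧ Multiset.card T ≤ ℓ
    · obtain ⟨T, hTS, hT0, hTsum, hTc⟩ := hshort
      refine extend_zerosum k S T (S - T) hT0 hTsum
        (by rw [add_comm]; exact tsub_add_cancel_of_le hTS) (dk_spec k _ ?_)
      have := Multiset.card_sub hTS
      have hN1 : Dk G k + ℓ ≤ N := le_max_left _ _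
      omega
    · -- no short zero-sum in S; append -S.sum
      push_neg at hshort
      set x := S.sum with hx
      set S' := (-x) ::ₘ S with hS'
      have hcS' : m ≤ Multiset.card S' := by
        rw [hS', Multiset.card_cons]
        have hN2 : m - 1 ≤ N := le_max_right _ _
        omega
      obtain ⟨T, hTle, hT0, hTs, hTc⟩ := hPn S' hcS'
      have hnotTS : ¬ T ≤ S := fun hc => absurd hTc (hshort T hc hT0 hTs).not_ge
      have hxT : -x ∈ T := by
        by_contra hxT
        refine hnotTS (Multiset.le_iff_count.mpr fun y => ?_)
        have := Multiset.le_iff_count.mp hTle y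
        rw [hS', Multiset.count_cons] at this
        by_cases hy : y = -x
        · subst hy; simpa [Multiset.count_eq_zero_of_notMem hxT] using Nat.zero_le _
        · simpa [hy] using this
      set U := T.erase (-x) with hU
      have hTU : T = (-x) ::ₘ U := (Multiset.cons_erase hxT).symm
      have hUS : U ≤ S := by
        rw [hTU, hS'] at hTle
        exact (Multiset.cons_le_cons_iff (-x)).mp hTle
      have hUsum : U.sum = x := by
        have : T.sum = -x + U.sum := by rw [hTU, Multiset.sum_cons]
        rw [hTs] at this
        linear_combination (norm := abel) -this
      have hUcard : Multiset.card U ≤ ℓ - 1 := by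
        have : Multiset.card T = Multiset.card U + 1 := by rw [hTU, Multiset.card_cons]
        omega
      set S₀ := S - U with hS₀
      have hS₀U : S₀ + U = S := tsub_add_cancel_of_le hUS
      have hcS₀ : Multiset.card S₀ = Multiset.card S - Multiset.card U :=
        Multiset.card_sub hUS
      have hcS₀' : Dk G k + 1 ≤ Multiset.card S₀ := by
        have hN1 : Dk G k + ℓ ≤ N := le_max_left _ _
        omega
      have hS₀sum : S₀.sum = 0 := by
        have : S₀.sum + U.sum = S.sum := by rw [← Multiset.sum_add, hS₀U]
        rw [hUsum, ← hx] at this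
        linear_combination (norm := abel) this
      have hS₀ne : S₀ ≠ 0 := by
        intro hc
        rw [hc] at hcS₀'
        simp at hcS₀'
      obtain ⟨e, he⟩ := Multiset.exists_mem_of_ne_zero hS₀ne
      have hY : Dk G k ≤ Multiset.card (S₀.erase e) := by
        rw [Multiset.card_erase_of_mem he, Nat.pred_eq_sub_one]
        omega
      obtain ⟨F, hFc, hFz, hFle⟩ := dk_spec k _ hY
      have hFle' : F.sum ≤ S₀ := le_trans hFle (Multiset.erase_le e S₀)
      set Z := S₀ - F.sum with hZ
      have hZF : Z + F.sum = S₀ := tsub_add_cancel_of_le hFle'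
      have hZne : Z ≠ 0 := by
        intro hc
        have h1 : Multiset.card F.sum ≤ Multiset.card (S₀.erase e) :=
          Multiset.card_le_card hFle
        rw [Multiset.card_erase_of_mem he, Nat.pred_eq_sub_one] at h1
        have h2 : Multiset.card Z + Multiset.card F.sum = Multiset.card S₀ := by
          rw [← Multiset.card_add, hZF]
        rw [hc] at h2
        simp at h2
        omega
      have hZsum : Z.sum = 0 := by
        have h1 : Z.sum + F.sum.sum = S₀.sum := by rw [← Multiset.sum_add, hZF]
        rw [hS₀sum, sum_join_eq_zero F (fun A hA => (hFz A hA).2)] at h1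
        simpa using h1
      refine ⟨Z ::ₘ F, by simp [hFc], ?_, ?_⟩
      · intro A hA
        rcases Multiset.mem_cons.mp hA with h' | h'
        · exact h' ▸ ⟨hZne, hZsum⟩
        · exact hFz A h'
      · rw [Multiset.sum_cons, hZF, hS₀]
        exact tsub_le_self
end

section
/- For every finite abelian group G, every zero-sum sequence B over G satisfies max L(B) ≥ (|B| − η(G) + 1)/exp(G), where η(G) = s_{≤exp(G)}(G). -/
open Multiset

section Aux

variable {G : Type*} [AddCommGroup G]

lemma myCardSum (ζ : Multiset (Multiset G)) :
    Multiset.card ζ.sum = (ζ.map Multiset.card).sum := by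
  induction ζ using Multiset.induction with
  | empty => simp
  | cons a s ih => simp [ih]

lemma myLengthSetBdd (B : Multiset G) : BddAbove (lengthSet B) := by
  refine ⟨Multiset.card B, fun n hn => ?_⟩
  obtain ⟨ζ, ⟨hsum, hmin⟩, hcard⟩ := hn
  have h1 : ∀ x ∈ ζ.map Multiset.card, 1 ≤ x := by
    intro x hx
    obtain ⟨A, hA, rfl⟩ := Multiset.mem_map.mp hx
    exact Multiset.card_pos.mpr (hmin A hA).1
  have := Multiset.card_nsmul_le_sum h1
  simp only [smul_eq_mul, mul_one, Multiset.card_map] at this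
  rw [← hcard, ← hsum, myCardSum]
  exact this

/-- Every zero-sum multiset factors into minimal zero-sum sequences. -/
lemma myExistsFact : ∀ n (B : Multiset G), Multiset.card B ≤ n → B.sum = 0 →
    ∃ ζ : Multiset (Multiset G), IsFactorization ζ B := by
  intro n
  induction n with
  | zero =>
    intro B hc _
    have : B = 0 := Multiset.card_eq_zero.mp (Nat.le_zero.mp hc)
    exact ⟨0, by simp [this, IsFactorization], by simp⟩
  | succ n ih =>
    intro B hc hs
    by_cases hB : B = 0
    · exact ⟨0, by simp [hB, IsFactorization], by simp⟩
    · classical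
      set P : Set ℕ := {m | ∃ T ≤ B, T ≠ 0 ∧ T.sum = 0 ∧ Multiset.card T = m} with hP
      have hPne : P.Nonempty := ⟨Multiset.card B, B, le_refl B, hB, hs, rfl⟩
      obtain ⟨T, hTB, hTne, hTs, hTc⟩ := Nat.sInf_mem hPne
      have hTmin : IsMinZeroSum T := by
        refine ⟨hTne, hTs, fun T' hT' hT'ne hT's => ?_⟩
        have : sInf P ≤ Multiset.card T' :=
          Nat.sInf_le ⟨T', le_trans hT' hTB, hT'ne, hT's, rfl⟩
        exact Multiset.eq_of_le_of_card_le hT' (hTc ▸ this)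
      have hadd : T + (B - T) = B := add_tsub_cancel_of_le hTB
      have hBs : (B - T).sum = 0 := by
        have := congrArg Multiset.sum hadd
        rw [Multiset.sum_add, hTs, zero_add] at this
        rw [this, hs]
      have hTpos : 0 < Multiset.card T := Multiset.card_pos.mpr hTne
      have hBc : Multiset.card (B - T) ≤ n := by
        have := congrArg Multiset.card hadd
        rw [Multiset.card_add] at this
        omega
      obtain ⟨ζ', hζ'⟩ := ih (B - T) hBc hBs
      refine ⟨T ::ₘ ζ', ?_, ?_⟩
      · rw [Multiset.sum_cons, hζ'.1, hadd]
      · intro A hA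
        rcases Multiset.mem_cons.mp hA with h | h
        · exact h ▸ hTmin
        · exact hζ'.2 A h

end Aux

section Aux2

variable {G : Type*} [AddCommGroup G] [Fintype G]

lemma myEtaSpec : (1 ≤ etaC G) ∧ ∀ S : Multiset G, etaC G ≤ Multiset.card S →
    ∃ T ≤ S, T ≠ 0 ∧ T.sum = 0 ∧ Multiset.card T ≤ AddMonoid.exponent G := by
  classical
  set e := AddMonoid.exponent G with he
  have hepos : 0 < e := AddMonoid.ExponentExists.of_finite.exponent_pos
  set P : Set ℕ := { m : ℕ | ∀ S : Multiset G, m ≤ Multiset.card S →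
    ∃ T ≤ S, T ≠ 0 ∧ T.sum = 0 ∧ Multiset.card T ≤ e } with hP
  have hPne : P.Nonempty := by
    refine ⟨Fintype.card G * (e - 1) + 1, fun S hS => ?_⟩
    have hg : ∃ g : G, e ≤ S.count g := by
      by_contra h
      push_neg at h
      have hle : Multiset.card S ≤ Fintype.card G * (e - 1) := by
        calc Multiset.card S = ∑ g ∈ S.toFinset, S.count g :=
              (Multiset.toFinset_sum_count_eq S).symm
          _ ≤ ∑ _g ∈ S.toFinset, (e - 1) := by
              refine Finset.sum_le_sum fun g _ => ?_
              have := h g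
              omega
          _ = S.toFinset.card * (e - 1) := by rw [Finset.sum_const, smul_eq_mul]
          _ ≤ Fintype.card G * (e - 1) := by
              exact Nat.mul_le_mul_right _ (Finset.card_le_card (Finset.subset_univ _))
      omega
    obtain ⟨g, hg⟩ := hg
    have hod : addOrderOf g ∣ e := AddMonoid.addOrder_dvd_exponent g
    have hodpos : 0 < addOrderOf g := addOrderOf_pos g
    have hodle : addOrderOf g ≤ e := Nat.le_of_dvd hepos hod
    refine ⟨Multiset.replicate (addOrderOf g) g, ?_, ?_, ?_, ?_⟩
    · rw [Multiset.le_iff_count]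
      intro a
      by_cases ha : a = g
      · subst ha; rw [Multiset.count_replicate_self]; omega
      · rw [Multiset.count_replicate]
        simp [Ne.symm ha]
    · intro h
      have := congrArg Multiset.card h
      simp only [Multiset.card_replicate, Multiset.card_zero] at this
      omega
    · rw [Multiset.sum_replicate]
      exact addOrderOf_nsmul_eq_zero g
    · simp [hodle]
  have h0 : (0 : ℕ) ∉ P := by
    intro h
    obtain ⟨T, hT, hTne, -, -⟩ := h 0 (by simp)
    exact hTne (Multiset.le_zero.mp hT)
  have hmem : etaC G ∈ P := Nat.sInf_mem hPne
  constructor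
  · rcases Nat.eq_zero_or_pos (etaC G) with h | h
    · exact absurd (h ▸ hmem) h0
    · exact h
  · exact hmem

lemma myKey : ∀ n (B : Multiset G), Multiset.card B ≤ n → B.sum = 0 →
    ∃ ζ : Multiset (Multiset G), IsFactorization ζ B ∧
      Multiset.card B < etaC G + AddMonoid.exponent G * Multiset.card ζ := by
  classical
  intro n
  induction n with
  | zero =>
    intro B hc _
    have hB : B = 0 := Multiset.card_eq_zero.mp (Nat.le_zero.mp hc)
    refine ⟨0, ⟨by simp [hB], by simp⟩, ?_⟩
    have := myEtaSpec (G := G).1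
    simp [hB]; omega
  | succ n ih =>
    intro B hc hs
    by_cases hsmall : Multiset.card B < etaC G
    · obtain ⟨ζ, hζ⟩ := myExistsFact (Multiset.card B) B le_rfl hs
      exact ⟨ζ, hζ, by omega⟩
    · push_neg at hsmall
      obtain ⟨T, hTB, hTne, hTs, hTc⟩ := myEtaSpec (G := G).2 B hsmall
      have hadd : T + (B - T) = B := add_tsub_cancel_of_le hTB
      have hBs : (B - T).sum = 0 := by
        have := congrArg Multiset.sum hadd
        rw [Multiset.sum_add, hTs, zero_add] at this
        rw [this, hs]
      have hTpos : 0 < Multiset.card T := Multiset.card_pos.mpr hTne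
      have hcards : Multiset.card T + Multiset.card (B - T) = Multiset.card B := by
        have := congrArg Multiset.card hadd
        rwa [Multiset.card_add] at this
      obtain ⟨ζ', hζ', hlt⟩ := ih (B - T) (by omega) hBs
      obtain ⟨ζT, hζT⟩ := myExistsFact (Multiset.card T) T le_rfl hTs
      have hζTne : ζT ≠ 0 := by
        intro h
        rw [h] at hζT
        exact hTne (hζT.1.symm ▸ rfl)
      have hζTpos : 1 ≤ Multiset.card ζT := Multiset.card_pos.mpr hζTne
      refine ⟨ζT + ζ', ⟨?_, ?_⟩, ?_⟩
      · rw [Multiset.sum_add, hζT.1, hζ'.1, hadd]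
      · intro A hA
        rcases Multiset.mem_add.mp hA with h | h
        · exact hζT.2 A h
        · exact hζ'.2 A h
      · rw [Multiset.card_add]
        have h1 : AddMonoid.exponent G ≤ AddMonoid.exponent G * Multiset.card ζT :=
          Nat.le_mul_of_pos_right _ hζTpos
        have := Nat.mul_add (AddMonoid.exponent G) (Multiset.card ζT) (Multiset.card ζ')
        omega

end Aux2

theorem statement5 {G : Type*} [AddCommGroup G] [Fintype G]
    (B : Multiset G) (hB : B.sum = 0) :
    ((Multiset.card B : ℚ) - (etaC G : ℚ) + 1) / (AddMonoid.exponent G : ℚ) ≤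
      (maxL B : ℚ) := by
  obtain ⟨ζ, hζ, hlt⟩ := myKey (Multiset.card B) B le_rfl hB
  have hkmem : Multiset.card ζ ∈ lengthSet B := ⟨ζ, hζ, rfl⟩
  have hk : Multiset.card ζ ≤ maxL B := le_csSup (myLengthSetBdd B) hkmem
  have hepos : 0 < AddMonoid.exponent G := AddMonoid.ExponentExists.of_finite.exponent_pos
  have heQ : (0 : ℚ) < (AddMonoid.exponent G : ℚ) := by exact_mod_cast hepos
  rw [div_le_iff₀ heQ]
  have h1 : (Multiset.card B : ℚ) + 1 ≤ (etaC G : ℚ) +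
      (AddMonoid.exponent G : ℚ) * (Multiset.card ζ : ℚ) := by exact_mod_cast hlt
  have h2 : (Multiset.card ζ : ℚ) ≤ (maxL B : ℚ) := by exact_mod_cast hk
  nlinarith
end
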